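/- Let W be a real symmetric n×n matrix such that both W and I − W are positive semidefinite (equivalently, all eigenvalues of W lie in [0,1]). Then for every s ∈ ℝⁿ and every natural number N ≥ 1, ‖(I−W)^N·s − (I−W)^{N+1}·s‖₂ ≤ (N^N/(N+1)^{N+1})·‖s‖₂. Consequently, for every δ > 0 there exists N₀ ∈ ℕ such that ‖(I−W)^N·s − (I−W)^{N+1}·s‖₂ < δ for all N ≥ N₀. -/

import Mathlib

open scoped Matrix

/-- The scalar maximization: for `μ ∈ [0,1]` and `N ≥ 1`,
`μ^N (1-μ) ≤ N^N/(N+1)^(N+1)`. -/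
lemma stmt17_aux_key (N : ℕ) (hN : 1 ≤ N) {μ : ℝ} (h0 : 0 ≤ μ) (h1 : μ ≤ 1) :
    μ ^ N * (1 - μ) ≤ (N : ℝ) ^ N / ((N : ℝ) + 1) ^ (N + 1) := by
  have hNpos : (0 : ℝ) < N := by exact_mod_cast hN
  set x : ℝ := μ * ((N : ℝ) + 1) / N with hxdef
  set u : ℝ := 1 - x with hudef
  have hx0 : 0 ≤ x := by positivity
  have hu1 : u ≤ 1 := by simp [hudef]; linarith
  have hN1 : (1 : ℝ) ≤ N := by exact_mod_cast hN
  have hum : -1 ≤ u := by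
    have hx2 : x ≤ ((N : ℝ) + 1) / N := by
      rw [hxdef]
      gcongr
      nlinarith
    have : ((N : ℝ) + 1) / N ≤ 2 := by
      rw [div_le_iff₀ hNpos]; nlinarith
    simp only [hudef]; linarith
  have hmain : x ^ N * (1 + N * u) ≤ 1 := by
    rcases le_or_gt (1 + (N : ℝ) * u) 0 with h | h
    · exact le_trans (mul_nonpos_of_nonneg_of_nonpos (pow_nonneg hx0 N) h) zero_le_one
    · have hbern : 1 + (N : ℝ) * u ≤ (1 + u) ^ N :=
        one_add_mul_le_pow (by linarith) N
      calc x ^ N * (1 + (N : ℝ) * u) ≤ x ^ N * (1 + u) ^ N :=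
            mul_le_mul_of_nonneg_left hbern (pow_nonneg hx0 N)
        _ = ((1 - u) * (1 + u)) ^ N := by rw [mul_pow]; congr 1; simp [hudef]
        _ = (1 - u ^ 2) ^ N := by ring_nf
        _ ≤ 1 := by
            have hu2a : (0:ℝ) ≤ 1 - u ^ 2 := by nlinarith
            have hu2b : (1:ℝ) - u ^ 2 ≤ 1 := by nlinarith [sq_nonneg u]
            exact pow_le_one₀ hu2a hu2b
  have heq : μ ^ N * (1 - μ) =
      (N : ℝ) ^ N / ((N : ℝ) + 1) ^ (N + 1) * (x ^ N * (1 + N * u)) := by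
    have hu2 : (1 : ℝ) + N * u = ((N : ℝ) + 1) * (1 - μ) := by
      simp only [hudef, hxdef]
      field_simp
      ring
    have hxN : x ^ N = μ ^ N * ((N : ℝ) + 1) ^ N / (N : ℝ) ^ N := by
      rw [hxdef, div_pow, mul_pow]
    rw [hu2, hxN, pow_succ]
    field_simp
  rw [heq]
  calc (N : ℝ) ^ N / ((N : ℝ) + 1) ^ (N + 1) * (x ^ N * (1 + N * u)) ≤
      (N : ℝ) ^ N / ((N : ℝ) + 1) ^ (N + 1) * 1 :=
        mul_le_mul_of_nonneg_left hmain (by positivity)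
    _ = (N : ℝ) ^ N / ((N : ℝ) + 1) ^ (N + 1) := mul_one _

/-- Pointwise domination gives a Euclidean norm bound. -/
lemma stmt17_aux_norm {n : ℕ} {C : ℝ} (hC : 0 ≤ C) (f g : EuclideanSpace ℝ (Fin n))
    (h : ∀ i, |f i| ≤ C * |g i|) : ‖f‖ ≤ C * ‖g‖ := by
  rw [EuclideanSpace.norm_eq, EuclideanSpace.norm_eq]
  have h1 : ∑ i, ‖f i‖ ^ 2 ≤ C ^ 2 * ∑ i, ‖g i‖ ^ 2 := by
    rw [Finset.mul_sum]
    apply Finset.sum_le_sum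
    intro i _
    have := h i
    rw [Real.norm_eq_abs, Real.norm_eq_abs]
    nlinarith [abs_nonneg (f i), abs_nonneg (g i), sq_abs (f i), sq_abs (g i)]
  calc Real.sqrt (∑ i, ‖f i‖ ^ 2) ≤ Real.sqrt (C ^ 2 * ∑ i, ‖g i‖ ^ 2) :=
        Real.sqrt_le_sqrt h1
    _ = C * Real.sqrt (∑ i, ‖g i‖ ^ 2) := by
        rw [Real.sqrt_mul (sq_nonneg C), Real.sqrt_sq hC]

/-- Let `W` be a real symmetric `n×n` matrix with both `W` and `I - W` positive
semidefinite (all eigenvalues of `W` in `[0,1]`). Then for every `s ∈ ℝⁿ` and every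
`N ≥ 1`, `‖(I-W)^N s - (I-W)^(N+1) s‖₂ ≤ (N^N/(N+1)^(N+1)) ‖s‖₂` (Euclidean norm), and
consequently for every `δ > 0` there exists `N₀` such that
`‖(I-W)^N s - (I-W)^(N+1) s‖₂ < δ` for all `N ≥ N₀`. -/
theorem stmt17 (n : ℕ) (W : Matrix (Fin n) (Fin n) ℝ) (hsym : W.IsSymm)
    (hpsd : W.PosSemidef) (hpsd' : ((1 : Matrix (Fin n) (Fin n) ℝ) - W).PosSemidef)
    (s : EuclideanSpace ℝ (Fin n)) :
    (∀ N : ℕ, 1 ≤ N →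
      ‖Matrix.toEuclideanLin (((1 : Matrix (Fin n) (Fin n) ℝ) - W) ^ N) s -
          Matrix.toEuclideanLin (((1 : Matrix (Fin n) (Fin n) ℝ) - W) ^ (N + 1)) s‖ ≤
        (N : ℝ) ^ N / (N + 1 : ℝ) ^ (N + 1) * ‖s‖) ∧
    ∀ δ : ℝ, 0 < δ → ∃ N₀ : ℕ, ∀ N ≥ N₀,
      ‖Matrix.toEuclideanLin (((1 : Matrix (Fin n) (Fin n) ℝ) - W) ^ N) s -
          Matrix.toEuclideanLin (((1 : Matrix (Fin n) (Fin n) ℝ) - W) ^ (N + 1)) s‖ < δ := by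
  set A : Matrix (Fin n) (Fin n) ℝ := 1 - W with hAdef
  have hA : A.IsHermitian := hpsd'.1
  set b := hA.eigenvectorBasis with hbdef
  set μ := hA.eigenvalues with hμdef
  -- eigenvalues in [0,1]
  have hμ0 : ∀ i, 0 ≤ μ i := fun i => hpsd'.eigenvalues_nonneg i
  have hvv : ∀ i, dotProduct (star (⇑(b i))) (⇑(b i)) = 1 := by
    intro i
    have h1 : (inner ℝ (b i) (b i) : ℝ) = 1 := by
      have hb1 := b.orthonormal.1 i
      rw [real_inner_self_eq_norm_sq, hb1]; norm_num
    rw [EuclideanSpace.inner_eq_star_dotProduct] at h1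
    exact h1
  have hμ1 : ∀ i, μ i ≤ 1 := by
    intro i
    have hW := hpsd.dotProduct_mulVec_nonneg (⇑(b i))
    have hei := hA.eigenvalues_eq i
    have hWA : W = 1 - A := by rw [hAdef, sub_sub_cancel]
    rw [hWA, Matrix.sub_mulVec, Matrix.one_mulVec, dotProduct_sub, hvv i] at hW
    simp only [RCLike.re_to_real] at hW hei
    rw [← hμdef] at hei
    linarith [hW, hei.le, hei.ge]
  -- action of powers on eigenvectors
  have hmv : ∀ (k : ℕ) (i : Fin n), A ^ k *ᵥ ⇑(b i) = (μ i ^ k) • ⇑(b i) := by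
    intro k i
    induction k with
    | zero => simp [Matrix.one_mulVec]
    | succ k ih =>
        rw [pow_succ, ← Matrix.mulVec_mulVec, hbdef, hA.mulVec_eigenvectorBasis,
          Matrix.mulVec_smul, ← hbdef, ih, smul_smul, pow_succ]
        ring_nf
        rfl
  -- main estimate
  have hbound : ∀ N : ℕ, 1 ≤ N →
      ‖Matrix.toEuclideanLin (A ^ N) s - Matrix.toEuclideanLin (A ^ (N + 1)) s‖ ≤
        (N : ℝ) ^ N / (N + 1 : ℝ) ^ (N + 1) * ‖s‖ := by
    intro N hN
    set M : Matrix (Fin n) (Fin n) ℝ := A ^ N - A ^ (N + 1) with hMdef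
    have hdiff : Matrix.toEuclideanLin (A ^ N) s - Matrix.toEuclideanLin (A ^ (N + 1)) s
        = Matrix.toEuclideanLin M s := by
      rw [hMdef, map_sub]; rfl
    have hM : M.IsHermitian := (hA.pow N).sub (hA.pow (N + 1))
    have hSym : (Matrix.toEuclideanLin M).IsSymmetric :=
      Matrix.isHermitian_iff_isSymmetric.mp hM
    have hTb : ∀ i, Matrix.toEuclideanLin M (b i) = (μ i ^ N * (1 - μ i)) • (b i) := by
      intro i
      have h1 : M *ᵥ ⇑(b i) = (μ i ^ N * (1 - μ i)) • ⇑(b i) := by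
        rw [hMdef, Matrix.sub_mulVec, hmv N i, hmv (N + 1) i, ← sub_smul]
        congr 1
        ring
      ext j
      have := congrFun h1 j
      simpa [Matrix.toEuclideanLin_apply] using this
    have hrepr : ∀ i, b.repr (Matrix.toEuclideanLin M s) i
        = (μ i ^ N * (1 - μ i)) * b.repr s i := by
      intro i
      rw [b.repr_apply_apply, b.repr_apply_apply, ← hSym (b i) s, hTb i,
        real_inner_smul_left]
    rw [hdiff]
    have hnorm1 : ‖Matrix.toEuclideanLin M s‖ = ‖b.repr (Matrix.toEuclideanLin M s)‖ :=
      (b.repr.norm_map _).symm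
    have hnorm2 : ‖s‖ = ‖b.repr s‖ := (b.repr.norm_map _).symm
    rw [hnorm1, hnorm2]
    apply stmt17_aux_norm (by positivity)
    intro i
    rw [hrepr i, abs_mul]
    apply mul_le_mul_of_nonneg_right _ (abs_nonneg _)
    rw [abs_of_nonneg (by nlinarith [hμ0 i, hμ1 i, pow_nonneg (hμ0 i) N])]
    exact stmt17_aux_key N hN (hμ0 i) (hμ1 i)
  refine ⟨hbound, ?_⟩
  intro δ hδ
  refine ⟨max 1 ⌈‖s‖ / δ⌉₊, fun N hNge => ?_⟩
  have hN1 : 1 ≤ N := le_trans (le_max_left _ _) hNge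
  have hNc : ⌈‖s‖ / δ⌉₊ ≤ N := le_trans (le_max_right _ _) hNge
  have hNs : ‖s‖ / δ ≤ N := le_trans (Nat.le_ceil _) (by exact_mod_cast hNc)
  have hs_lt : ‖s‖ < δ * ((N : ℝ) + 1) := by
    have : ‖s‖ ≤ δ * N := by
      rw [div_le_iff₀ hδ] at hNs; linarith
    nlinarith
  have hC : (N : ℝ) ^ N / (N + 1 : ℝ) ^ (N + 1) ≤ 1 / ((N : ℝ) + 1) := by
    have hpow : (N : ℝ) ^ N ≤ ((N : ℝ) + 1) ^ N :=
      pow_le_pow_left₀ (Nat.cast_nonneg N) (by linarith) N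
    rw [pow_succ, div_le_div_iff₀ (by positivity) (by positivity)]
    nlinarith [pow_nonneg (Nat.cast_nonneg N : (0:ℝ) ≤ N) N,
      pow_pos (by positivity : (0:ℝ) < (N : ℝ) + 1) N]
  calc ‖Matrix.toEuclideanLin (A ^ N) s - Matrix.toEuclideanLin (A ^ (N + 1)) s‖
      ≤ (N : ℝ) ^ N / (N + 1 : ℝ) ^ (N + 1) * ‖s‖ := hbound N hN1
    _ ≤ 1 / ((N : ℝ) + 1) * ‖s‖ :=
        mul_le_mul_of_nonneg_right hC (norm_nonneg _)
    _ < δ := by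
        rw [div_mul_eq_mul_div, one_mul, div_lt_iff₀ (by positivity)]
        linarith
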